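/- Let A be a T-brace. Then for every natural number n, the additive group of ζ_n(⋆,A)/ζ(⋆,A) is periodic; that is, for every a ∈ ζ_n(⋆,A) there is a positive integer m with ma ∈ ζ(⋆,A). -/

import Mathlib

/-!
Basic theory of left braces (skew left braces of abelian type), following
Dixon–Kurdachenko–Subbotin, "On the structure of braces whose subideals are ideals".
-/

universe u v

/-- A left brace: an abelian group `(A,+)`, a group `(A,·)`, satisfying
`a(b+c) = ab + ac - a`.  (The additive and multiplicative identities then coincide.) -/
class LeftBrace (A : Type u) extends AddCommGroup A, Group A where
  mul_add_eq : ∀ a b c : A, a * (b + c) = a * b + a * c - a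

namespace LeftBrace

variable {A : Type u} [LeftBrace A]

/-- The star operation `a ⋆ b = ab - a - b`. -/
def bstar (a b : A) : A := a * b - a - b

/-- A subset of a left brace is a subbrace if it is closed under the additive-group
and multiplicative-group operations (equivalently, it is a left brace under the
restricted operations). -/
structure IsSubbrace (S : Set A) : Prop where
  zero_mem : (0 : A) ∈ S
  add_mem : ∀ {a b : A}, a ∈ S → b ∈ S → a + b ∈ S
  neg_mem : ∀ {a : A}, a ∈ S → -a ∈ S
  mul_mem : ∀ {a b : A}, a ∈ S → b ∈ S → a * b ∈ S
  inv_mem : ∀ {a : A}, a ∈ S → a⁻¹ ∈ S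

/-- `I` is an ideal of the subbrace `J`: `I ⊆ J`, both are subbraces, and
`a ⋆ z, z ⋆ a ∈ I` for all `a ∈ J`, `z ∈ I`. -/
structure IsIdealIn (I J : Set A) : Prop where
  subset : I ⊆ J
  subbrace : IsSubbrace I
  ambient_subbrace : IsSubbrace J
  star_mem_left : ∀ a ∈ J, ∀ z ∈ I, bstar a z ∈ I
  star_mem_right : ∀ a ∈ J, ∀ z ∈ I, bstar z a ∈ I

/-- `I` is an ideal of the brace `A`. -/
def IsIdeal (I : Set A) : Prop := IsIdealIn I (Set.univ : Set A)

/-- `A` is a T-brace if being an ideal is a transitive relation: an ideal of an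
ideal of `A` is an ideal of `A`. -/
def IsTBrace (A : Type u) [LeftBrace A] : Prop :=
  ∀ I J : Set A, IsIdealIn I J → IsIdeal J → IsIdeal I

/-- The `⋆`-center `ζ(⋆,A) = {a | a ⋆ x = x ⋆ a = 0 for all x}`. -/
def starCenter (A : Type u) [LeftBrace A] : Set A :=
  {a : A | ∀ x : A, bstar a x = 0 ∧ bstar x a = 0}

/-- The preimage in `A` of the `⋆`-center of the quotient of `A` by (the ideal) `S`:
`a` belongs to it iff `a ⋆ x ∈ S` and `x ⋆ a ∈ S` for every `x ∈ A`. -/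
def nextCenter (A : Type u) [LeftBrace A] (S : Set A) : Set A :=
  {a : A | ∀ x : A, bstar a x ∈ S ∧ bstar x a ∈ S}

/-- The upper `⋆`-central series, indexed by naturals:
`ζ₀(⋆,A) = 0` and `ζ_{n+1}(⋆,A)/ζ_n(⋆,A) = ζ(⋆, A/ζ_n(⋆,A))`. -/
def zetaNat (A : Type u) [LeftBrace A] : ℕ → Set A
  | 0 => ({0} : Set A)
  | n + 1 => nextCenter A (zetaNat A n)

/-- The upper `⋆`-central series, indexed by ordinals (unions at limit ordinals). -/
noncomputable def zetaOrd (A : Type u) [LeftBrace A] (o : Ordinal.{v}) : Set A :=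
  Ordinal.limitRecOn o (({0} : Set A))
    (fun _ ih => nextCenter A ih)
    (fun o _ ih => ⋃ (o' : Ordinal) (h : o' < o), ih o' h)

/-- The upper `⋆`-hypercenter `ζ_∞(⋆,A)`: the final (stable) term of the upper
`⋆`-central series, i.e. the union of all its terms. -/
noncomputable def starHypercenter (A : Type u) [LeftBrace A] : Set A :=
  ⋃ o : Ordinal.{u}, zetaOrd A o

/-- `A` is `⋆`-hypercentral if `A = ζ_γ(⋆,A)` for some ordinal `γ`. -/
def IsStarHypercentral (A : Type u) [LeftBrace A] : Prop :=
  ∃ γ : Ordinal.{u}, zetaOrd A γ = (Set.univ : Set A)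

/-- `K ⋆ L`: the additive subgroup of `(A,+)` generated by all `x ⋆ y`, `x ∈ K`, `y ∈ L`. -/
def setStar (K L : Set A) : AddSubgroup A :=
  AddSubgroup.closure {z : A | ∃ x ∈ K, ∃ y ∈ L, z = bstar x y}

/-- `rightStarSeries A n = A^{(n+1)}`, where `A^{(1)} = A` and `A^{(n+1)} = A^{(n)} ⋆ A`. -/
def rightStarSeries (A : Type u) [LeftBrace A] : ℕ → Set A
  | 0 => (Set.univ : Set A)
  | n + 1 => ((setStar (rightStarSeries A n) (Set.univ : Set A) : AddSubgroup A) : Set A)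

/-- `leftStarSeries A n = A^{n+1}`, where `A^1 = A` and `A^{n+1} = A ⋆ A^n`. -/
def leftStarSeries (A : Type u) [LeftBrace A] : ℕ → Set A
  | 0 => (Set.univ : Set A)
  | n + 1 => ((setStar (Set.univ : Set A) (leftStarSeries A n) : AddSubgroup A) : Set A)

/-- `A` is Smoktunowicz-nilpotent if `A^{(n)} = A^k = 0` for some naturals `n, k`. -/
def IsSmoktunowiczNilpotent (A : Type u) [LeftBrace A] : Prop :=
  ∃ n k : ℕ, rightStarSeries A n = ({0} : Set A) ∧ leftStarSeries A k = ({0} : Set A)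

/-- The subbrace generated by a subset `M`: the intersection of all subbraces containing `M`. -/
def braceClosure (M : Set A) : Set A := ⋂₀ {S : Set A | IsSubbrace S ∧ M ⊆ S}

end LeftBrace

namespace LeftBrace

section Aux

variable {A : Type u} [LeftBrace A]

theorem mul_zero' (a : A) : a * 0 = a := by
  have h := mul_add_eq a 0 0
  rw [add_zero] at h
  linear_combination (norm := abel1) -h

theorem one_eq_zero : (1 : A) = 0 := by
  have h := mul_zero' (1 : A)
  rw [one_mul] at h
  exact h.symm

theorem zero_mul' (a : A) : 0 * a = a := by
  rw [← one_eq_zero, one_mul]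

theorem mul_eq (a b : A) : a * b = bstar a b + a + b := by
  simp only [bstar]
  abel

theorem bstar_add_right (a b c : A) : bstar a (b + c) = bstar a b + bstar a c := by
  simp only [bstar, mul_add_eq]
  abel

/-- `bstar a ·` as an additive homomorphism. -/
def bstarHom (a : A) : A →+ A := AddMonoidHom.mk' (bstar a) (bstar_add_right a)

theorem bstar_zero_right (a : A) : bstar a 0 = 0 := (bstarHom a).map_zero

theorem bstar_zero_left (x : A) : bstar 0 x = 0 := by
  simp [bstar, zero_mul']

theorem bstar_neg_right (a b : A) : bstar a (-b) = -(bstar a b) := (bstarHom a).map_neg b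

theorem bstar_zsmul_right (a b : A) (m : ℤ) : bstar a (m • b) = m • bstar a b :=
  (bstarHom a).map_zsmul m b

theorem bstar_nsmul_right (a b : A) (m : ℕ) : bstar a (m • b) = m • bstar a b :=
  (bstarHom a).map_nsmul m b

theorem mul_sub' (a b c : A) : a * (b - c) = a * b - a * c + a := by
  have h := mul_add_eq a (b - c) c
  rw [sub_add_cancel] at h
  linear_combination (norm := abel1) -h

theorem bstar_mul_left (a b c : A) :
    bstar (a * b) c = bstar a (bstar b c) + bstar b c + bstar a c := by
  simp only [bstar]
  have h1 : a * (b * c - b - c) = a * (b * c) - a * b - a * c + a + a := by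
    rw [show b * c - b - c = (b * c - b) - c from rfl, mul_sub', mul_sub']
    abel
  rw [h1, mul_assoc]
  abel

theorem inv_eq' (a : A) : a⁻¹ = -a - bstar a a⁻¹ := by
  have h := mul_eq a a⁻¹
  rw [mul_inv_cancel, one_eq_zero] at h
  linear_combination (norm := abel1) -h

theorem bstar_inv_left (a x : A) :
    bstar a⁻¹ x = -bstar a (bstar a⁻¹ x) - bstar a x := by
  have h := bstar_mul_left a a⁻¹ x
  rw [mul_inv_cancel, one_eq_zero, bstar_zero_left] at h
  linear_combination (norm := abel1) -h

theorem mem_nextCenter {S : Set A} {a : A} :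
    a ∈ nextCenter A S ↔ ∀ x : A, bstar a x ∈ S ∧ bstar x a ∈ S := Iff.rfl

theorem mem_zeta_succ {n : ℕ} {a : A} :
    a ∈ zetaNat A (n + 1) ↔
      ∀ x : A, bstar a x ∈ zetaNat A n ∧ bstar x a ∈ zetaNat A n := Iff.rfl

theorem zeta_mono : ∀ n : ℕ, zetaNat A n ⊆ zetaNat A (n + 1) := by
  intro n
  induction n with
  | zero =>
    intro a ha
    rw [show zetaNat A 0 = ({0} : Set A) from rfl, Set.mem_singleton_iff] at ha
    subst ha
    rw [mem_zeta_succ]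
    intro x
    simp [bstar_zero_left, bstar_zero_right, zetaNat]
  | succ n ih =>
    intro a ha
    rw [mem_zeta_succ] at ha ⊢
    intro x
    exact ⟨ih (ha x).1, ih (ha x).2⟩

theorem zeta_le {m n : ℕ} (h : m ≤ n) : zetaNat A m ⊆ zetaNat A n := by
  induction n with
  | zero => rw [Nat.le_zero] at h; subst h; exact le_refl _
  | succ n ih =>
    rcases Nat.lt_or_ge m (n + 1) with h' | h'
    · exact (ih (Nat.lt_succ_iff.mp h')).trans (zeta_mono n)
    · have : m = n + 1 := le_antisymm h h'
      subst this; exact le_refl _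

theorem zeta_star_closed : ∀ n : ℕ, ∀ a x : A, a ∈ zetaNat A n →
    bstar a x ∈ zetaNat A n ∧ bstar x a ∈ zetaNat A n := by
  intro n
  match n with
  | 0 =>
    intro a x ha
    rw [show zetaNat A 0 = ({0} : Set A) from rfl, Set.mem_singleton_iff] at ha
    subst ha
    simp [bstar_zero_left, bstar_zero_right, zetaNat]
  | n + 1 =>
    intro a x ha
    rw [mem_zeta_succ] at ha
    exact ⟨zeta_mono n (ha x).1, zeta_mono n (ha x).2⟩

theorem zeta_aux : ∀ n : ℕ,
    ((0 : A) ∈ zetaNat A n ∧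
     (∀ a b : A, a ∈ zetaNat A n → b ∈ zetaNat A n → a + b ∈ zetaNat A n) ∧
     (∀ a : A, a ∈ zetaNat A n → -a ∈ zetaNat A n)) ∧
    (∀ v t x : A, t ∈ zetaNat A n → bstar (v + t) x - bstar v x ∈ zetaNat A n) := by
  intro n
  induction n with
  | zero =>
    refine ⟨⟨rfl, ?_, ?_⟩, ?_⟩
    · intro a b ha hb
      rw [show zetaNat A 0 = ({0} : Set A) from rfl, Set.mem_singleton_iff] at *
      subst ha; subst hb; simp
    · intro a ha
      rw [show zetaNat A 0 = ({0} : Set A) from rfl, Set.mem_singleton_iff] at *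
      subst ha; simp
    · intro v t x ht
      rw [show zetaNat A 0 = ({0} : Set A) from rfl, Set.mem_singleton_iff] at *
      subst ht; simp
  | succ n ih =>
    obtain ⟨⟨z0, zadd, zneg⟩, L1w⟩ := ih
    have zsub : ∀ a b : A, a ∈ zetaNat A n → b ∈ zetaNat A n → a - b ∈ zetaNat A n := by
      intro a b ha hb
      rw [sub_eq_add_neg]; exact zadd _ _ ha (zneg _ hb)
    -- key decomposition lemma
    have decomp : ∀ v t : A, v + t = t * (v + bstar t⁻¹ v) := by
      intro v t
      have h1 : t * (t⁻¹ * (t + v)) = v + t := by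
        rw [← mul_assoc, mul_inv_cancel, one_eq_zero, zero_mul', add_comm]
      have h2 : t⁻¹ * (t + v) = v + bstar t⁻¹ v := by
        rw [mul_add_eq, inv_mul_cancel, one_eq_zero, mul_eq]
        abel
      rw [← h1, h2]
    have inv_star_mem : ∀ t v : A, t ∈ zetaNat A (n + 1) → bstar t⁻¹ v ∈ zetaNat A n := by
      intro t v ht
      rw [mem_zeta_succ] at ht
      rw [bstar_inv_left t v]
      exact zsub _ _ (zneg _ (ht _).1) (ht _).1
    have L1w' : ∀ v t x : A, t ∈ zetaNat A (n + 1) →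
        bstar (v + t) x - bstar v x ∈ zetaNat A n := by
      intro v t x ht
      have hs := inv_star_mem t v ht
      have heq := decomp v t
      have hexp := bstar_mul_left t (v + bstar t⁻¹ v) x
      rw [← heq] at hexp
      have key : bstar (v + t) x - bstar v x =
          bstar t (bstar (v + bstar t⁻¹ v) x) +
            ((bstar (v + bstar t⁻¹ v) x - bstar v x) + bstar t x) := by
        rw [hexp]; abel
      rw [mem_zeta_succ] at ht
      rw [key]
      exact zadd _ _ (ht _).1 (zadd _ _ (L1w _ _ _ hs) (ht _).1)
    refine ⟨⟨?_, ?_, ?_⟩, ?_⟩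
    · rw [mem_zeta_succ]
      intro x
      rw [bstar_zero_left, bstar_zero_right]
      exact ⟨z0, z0⟩
    · intro a b ha hb
      rw [mem_zeta_succ] at *
      intro x
      constructor
      · have hs : bstar a⁻¹ b ∈ zetaNat A n := by
          rw [bstar_inv_left a b]
          exact zsub _ _ (zneg _ (ha _).1) (ha _).1
        have heq := decomp b a
        rw [add_comm b a] at heq
        have hexp := bstar_mul_left a (b + bstar a⁻¹ b) x
        rw [← heq] at hexp
        have hmid : bstar (b + bstar a⁻¹ b) x ∈ zetaNat A n := by
          have := L1w b (bstar a⁻¹ b) x hs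
          have h2 : bstar (b + bstar a⁻¹ b) x =
              (bstar (b + bstar a⁻¹ b) x - bstar b x) + bstar b x := by abel
          rw [h2]
          exact zadd _ _ this (hb x).1
        rw [hexp]
        exact zadd _ _ (zadd _ _ (ha _).1 hmid) (ha _).1
      · rw [bstar_add_right]
        exact zadd _ _ (ha x).2 (hb x).2
    · intro a ha
      rw [mem_zeta_succ] at *
      intro x
      constructor
      · have hw : bstar a a⁻¹ ∈ zetaNat A n := (ha _).1
        have hneg : -a = a⁻¹ + bstar a a⁻¹ := by
          have h := inv_eq' a
          linear_combination (norm := abel1) -h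
        have hinv : bstar a⁻¹ x ∈ zetaNat A n := by
          rw [bstar_inv_left a x]
          exact zsub _ _ (zneg _ (ha _).1) (ha _).1
        rw [hneg]
        have h2 : bstar (a⁻¹ + bstar a a⁻¹) x =
            (bstar (a⁻¹ + bstar a a⁻¹) x - bstar a⁻¹ x) + bstar a⁻¹ x := by abel
        rw [h2]
        exact zadd _ _ (L1w _ _ _ hw) hinv
      · rw [bstar_neg_right]
        exact zneg _ (ha x).2
    · intro v t x ht
      exact zeta_mono n (L1w' v t x ht)

theorem zeta_zero_mem (n : ℕ) : (0 : A) ∈ zetaNat A n := (zeta_aux n).1.1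

theorem zeta_add_mem {n : ℕ} {a b : A} (ha : a ∈ zetaNat A n) (hb : b ∈ zetaNat A n) :
    a + b ∈ zetaNat A n := (zeta_aux n).1.2.1 a b ha hb

theorem zeta_neg_mem {n : ℕ} {a : A} (ha : a ∈ zetaNat A n) :
    -a ∈ zetaNat A n := (zeta_aux n).1.2.2 a ha

theorem zeta_sub_mem {n : ℕ} {a b : A} (ha : a ∈ zetaNat A n) (hb : b ∈ zetaNat A n) :
    a - b ∈ zetaNat A n := by
  rw [sub_eq_add_neg]; exact zeta_add_mem ha (zeta_neg_mem hb)

theorem zeta_L1w {n : ℕ} (v t x : A) (ht : t ∈ zetaNat A n) :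
    bstar (v + t) x - bstar v x ∈ zetaNat A n := (zeta_aux n).2 v t x ht

/-- `ζ_n(⋆,A)` as an additive subgroup. -/
def zetaAdd (n : ℕ) : AddSubgroup A where
  carrier := zetaNat A n
  zero_mem' := zeta_zero_mem n
  add_mem' := fun ha hb => zeta_add_mem ha hb
  neg_mem' := fun ha => zeta_neg_mem ha

theorem zeta_zsmul_mem {n : ℕ} {a : A} (m : ℤ) (ha : a ∈ zetaNat A n) :
    m • a ∈ zetaNat A n :=
  (zetaAdd (A := A) n).zsmul_mem ha m

theorem zeta_nsmul_mem {n : ℕ} {a : A} (m : ℕ) (ha : a ∈ zetaNat A n) :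
    m • a ∈ zetaNat A n :=
  (zetaAdd (A := A) n).nsmul_mem ha m

theorem bstar_mem_right_of_succ {n : ℕ} {u : A} (a : A) (hu : u ∈ zetaNat A (n + 1)) :
    bstar a u ∈ zetaNat A n := (mem_zeta_succ.mp hu a).2

theorem bstar_mem_left_of_succ {n : ℕ} {u : A} (a : A) (hu : u ∈ zetaNat A (n + 1)) :
    bstar u a ∈ zetaNat A n := (mem_zeta_succ.mp hu a).1

theorem add_decomp (v t : A) : v + t = t * (v + bstar t⁻¹ v) := by
  have h1 : t * (t⁻¹ * (t + v)) = v + t := by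
    rw [← mul_assoc, mul_inv_cancel, one_eq_zero, zero_mul', add_comm]
  have h2 : t⁻¹ * (t + v) = v + bstar t⁻¹ v := by
    rw [mul_add_eq, inv_mul_cancel, one_eq_zero, mul_eq]
    abel
  rw [← h1, h2]

/-- Sharp version of `zeta_L1w`: a perturbation from `ζ_{n+1}` only moves `bstar · x`
by an element of `ζ_n`. -/
theorem zeta_L1' {n : ℕ} (v x : A) {t : A} (ht : t ∈ zetaNat A (n + 1)) :
    bstar (v + t) x - bstar v x ∈ zetaNat A n := by
  have hs : bstar t⁻¹ v ∈ zetaNat A n := by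
    rw [bstar_inv_left t v]
    exact zeta_sub_mem (zeta_neg_mem (mem_zeta_succ.mp ht _).1) (mem_zeta_succ.mp ht _).1
  have heq := add_decomp v t
  have hexp := bstar_mul_left t (v + bstar t⁻¹ v) x
  rw [← heq] at hexp
  have key : bstar (v + t) x - bstar v x =
      bstar t (bstar (v + bstar t⁻¹ v) x) +
        ((bstar (v + bstar t⁻¹ v) x - bstar v x) + bstar t x) := by
    rw [hexp]; abel
  rw [key]
  exact zeta_add_mem (mem_zeta_succ.mp ht _).1
    (zeta_add_mem (zeta_L1w _ _ _ hs) (mem_zeta_succ.mp ht _).1)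

/-- `bstar` is additive in the first argument, two levels down the series. -/
theorem zeta_L2 {n : ℕ} {a b : A} (x : A) (ha : a ∈ zetaNat A (n + 2))
    (hb : b ∈ zetaNat A (n + 2)) :
    bstar (a + b) x - bstar a x - bstar b x ∈ zetaNat A n := by
  have ht : -(bstar a b) ∈ zetaNat A (n + 1) := zeta_neg_mem (mem_zeta_succ.mp ha b).1
  have heq : a + b = a * b + -(bstar a b) := by
    have h := mul_eq a b
    linear_combination (norm := abel1) -h
  have h1 : bstar (a * b + -(bstar a b)) x - bstar (a * b) x ∈ zetaNat A n :=
    zeta_L1' _ _ ht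
  have h2 := bstar_mul_left a b x
  have h3 : bstar a (bstar b x) ∈ zetaNat A n :=
    bstar_mem_right_of_succ a (mem_zeta_succ.mp hb x).1
  have key : bstar (a + b) x - bstar a x - bstar b x =
      (bstar (a + b) x - bstar (a * b) x) + bstar a (bstar b x) := by
    rw [h2]; abel
  rw [key, heq]
  exact zeta_add_mem h1 h3

theorem zeta_L2neg {n : ℕ} {a : A} (x : A) (ha : a ∈ zetaNat A (n + 2)) :
    bstar (-a) x + bstar a x ∈ zetaNat A n := by
  have h := zeta_L2 x ha (zeta_neg_mem ha)
  rw [add_neg_cancel, bstar_zero_left] at h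
  have key : bstar (-a) x + bstar a x = -(0 - bstar a x - bstar (-a) x) := by abel
  rw [key]
  exact zeta_neg_mem h

/-- `bstar` commutes with integer multiples in the first argument, two levels down. -/
theorem zeta_L3 {n : ℕ} {a : A} (x : A) (ha : a ∈ zetaNat A (n + 2)) (m : ℤ) :
    bstar (m • a) x - m • bstar a x ∈ zetaNat A n := by
  induction m using Int.induction_on with
  | zero =>
    have : bstar ((0 : ℤ) • a) x - (0 : ℤ) • bstar a x = 0 := by
      rw [zero_zsmul, zero_zsmul, bstar_zero_left, sub_zero]
    rw [this]
    exact zeta_zero_mem n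
  | succ k ih =>
    have hk : (k : ℤ) • a ∈ zetaNat A (n + 2) := zeta_zsmul_mem _ ha
    have h2 := zeta_L2 x hk ha
    have key : bstar (((k : ℤ) + 1) • a) x - ((k : ℤ) + 1) • bstar a x =
        (bstar ((k : ℤ) • a + a) x - bstar ((k : ℤ) • a) x - bstar a x) +
          (bstar ((k : ℤ) • a) x - (k : ℤ) • bstar a x) := by
      rw [add_smul, one_smul, add_smul, one_smul]
      abel
    rw [key]
    exact zeta_add_mem h2 ih
  | pred k ih =>
    have hk : (-k : ℤ) • a ∈ zetaNat A (n + 2) := zeta_zsmul_mem _ ha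
    have hna : -a ∈ zetaNat A (n + 2) := zeta_neg_mem ha
    have h2 := zeta_L2 x hk hna
    have h3 := zeta_L2neg x ha
    have key : bstar ((-(k : ℤ) - 1) • a) x - (-(k : ℤ) - 1) • bstar a x =
        (bstar ((-k : ℤ) • a + -a) x - bstar ((-k : ℤ) • a) x - bstar (-a) x) +
          (bstar ((-k : ℤ) • a) x - (-k : ℤ) • bstar a x) +
          (bstar (-a) x + bstar a x) := by
      rw [sub_smul, one_smul, sub_smul, one_smul, sub_eq_add_neg ((-k : ℤ) • a) a]
      abel
    rw [key]
    exact zeta_add_mem (zeta_add_mem h2 ih) h3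

theorem isSubbrace_univ : IsSubbrace (Set.univ : Set A) :=
  ⟨trivial, fun _ _ => trivial, fun _ => trivial, fun _ _ => trivial, fun _ => trivial⟩

theorem isSubbrace_of_add {S : Set A} (h0 : (0 : A) ∈ S)
    (hadd : ∀ {a b : A}, a ∈ S → b ∈ S → a + b ∈ S)
    (hneg : ∀ {a : A}, a ∈ S → -a ∈ S)
    (hmul : ∀ {a b : A}, a ∈ S → b ∈ S → bstar a b ∈ S)
    (hinv : ∀ {a : A}, a ∈ S → bstar a a⁻¹ ∈ S) : IsSubbrace S := by
  refine ⟨h0, fun ha hb => hadd ha hb, fun ha => hneg ha, ?_, ?_⟩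
  · intro a b ha hb
    rw [mul_eq]
    exact hadd (hadd (hmul ha hb) ha) hb
  · intro a ha
    rw [inv_eq' a, sub_eq_add_neg]
    exact hadd (hneg ha) (hneg (hinv ha))

theorem zeta_isSubbrace (n : ℕ) : IsSubbrace (zetaNat A n) :=
  isSubbrace_of_add (zeta_zero_mem n) (fun ha hb => zeta_add_mem ha hb)
    (fun ha => zeta_neg_mem ha)
    (fun ha _ => (zeta_star_closed n _ _ ha).1)
    (fun ha => (zeta_star_closed n _ _ ha).1)

theorem zeta_isIdeal (n : ℕ) : IsIdeal (zetaNat A n) where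
  subset := Set.subset_univ _
  subbrace := zeta_isSubbrace n
  ambient_subbrace := isSubbrace_univ
  star_mem_left := fun a _ z hz => (zeta_star_closed n z a hz).2
  star_mem_right := fun a _ z hz => (zeta_star_closed n z a hz).1

/-- Any additive subgroup squeezed between `ζ_n` and `ζ_{n+1}` is an ideal of a T-brace. -/
theorem isIdeal_of_between (hT : IsTBrace A) {n : ℕ} {S : Set A}
    (h0 : (0 : A) ∈ S)
    (hadd : ∀ {a b : A}, a ∈ S → b ∈ S → a + b ∈ S)
    (hneg : ∀ {a : A}, a ∈ S → -a ∈ S)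
    (hlow : zetaNat A n ⊆ S) (hhigh : S ⊆ zetaNat A (n + 1)) :
    IsIdeal S := by
  refine hT S (zetaNat A (n + 1)) ?_ (zeta_isIdeal (n + 1))
  refine ⟨hhigh, ?_, zeta_isSubbrace (n + 1), ?_, ?_⟩
  · refine isSubbrace_of_add h0 hadd hneg ?_ ?_
    · intro a b ha _
      exact hlow (mem_zeta_succ.mp (hhigh ha) b).1
    · intro a ha
      exact hlow (mem_zeta_succ.mp (hhigh ha) _).1
  · intro a ha z hz
    exact hlow (mem_zeta_succ.mp ha z).1
  · intro a ha z hz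
    exact hlow (mem_zeta_succ.mp (hhigh hz) a).1

/-- The crucial construction: for `b ∈ ζ_{k+2}`, the set `ℤb + ℤ(b⋆b) + ζ_k` is an
ideal of the T-brace `A`. -/
theorem key_star_ideal (hT : IsTBrace A) {k : ℕ} {b : A} (hb : b ∈ zetaNat A (k + 2)) :
    IsIdeal {y : A | ∃ s t : ℤ, ∃ u ∈ zetaNat A k, y = s • b + t • bstar b b + u} := by
  have hc : bstar b b ∈ zetaNat A (k + 1) := (mem_zeta_succ.mp hb b).1
  set c := bstar b b with hcdef
  set S : Set A := {y : A | ∃ s t : ℤ, ∃ u ∈ zetaNat A k, y = s • b + t • c + u} with hSdef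
  set J : Set A := {y : A | ∃ s : ℤ, ∃ u ∈ zetaNat A (k + 1), y = s • b + u} with hJdef
  have S0 : (0 : A) ∈ S := ⟨0, 0, 0, zeta_zero_mem k, by simp⟩
  have SofZ : ∀ u : A, u ∈ zetaNat A k → u ∈ S := fun u hu => ⟨0, 0, u, hu, by simp⟩
  have Sadd : ∀ {y z : A}, y ∈ S → z ∈ S → y + z ∈ S := by
    rintro y z ⟨s, t, u, hu, rfl⟩ ⟨s', t', u', hu', rfl⟩
    exact ⟨s + s', t + t', u + u', zeta_add_mem hu hu', by rw [add_smul, add_smul]; abel⟩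
  have Sneg : ∀ {y : A}, y ∈ S → -y ∈ S := by
    rintro y ⟨s, t, u, hu, rfl⟩
    exact ⟨-s, -t, -u, zeta_neg_mem hu, by rw [neg_smul, neg_smul]; abel⟩
  have SsubZ : S ⊆ zetaNat A (k + 2) := by
    rintro y ⟨s, t, u, hu, rfl⟩
    exact zeta_add_mem (zeta_add_mem (zeta_zsmul_mem s hb) (zeta_zsmul_mem t (zeta_mono _ hc)))
      (zeta_le (by omega) hu)
  have JsubZ : J ⊆ zetaNat A (k + 2) := by
    rintro y ⟨s, u, hu, rfl⟩
    exact zeta_add_mem (zeta_zsmul_mem s hb) (zeta_mono _ hu)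
  have SsubJ : S ⊆ J := by
    rintro y ⟨s, t, u, hu, rfl⟩
    exact ⟨s, t • c + u,
      zeta_add_mem (zeta_zsmul_mem t hc) (zeta_le (by omega) hu), by abel⟩
  have hJideal : IsIdeal J := by
    apply isIdeal_of_between hT (n := k + 1)
    · exact ⟨0, 0, zeta_zero_mem _, by simp⟩
    · rintro y z ⟨s, u, hu, rfl⟩ ⟨s', u', hu', rfl⟩
      exact ⟨s + s', u + u', zeta_add_mem hu hu', by rw [add_smul]; abel⟩
    · rintro y ⟨s, u, hu, rfl⟩
      exact ⟨-s, -u, zeta_neg_mem hu, by rw [neg_smul]; abel⟩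
    · intro u hu; exact ⟨0, u, hu, by simp⟩
    · exact JsubZ
  have E2 : ∀ (σ : ℤ) (w₀ : A), w₀ ∈ zetaNat A (k + 1) →
      bstar b (σ • b + w₀) - σ • c ∈ zetaNat A k := by
    intro σ w₀ hw
    have h1 : bstar b (σ • b + w₀) = σ • c + bstar b w₀ := by
      rw [bstar_add_right, bstar_zsmul_right, ← hcdef]
    rw [h1]
    have h2 : σ • c + bstar b w₀ - σ • c = bstar b w₀ := by abel
    rw [h2]
    exact bstar_mem_right_of_succ b hw
  have master : ∀ (s : ℤ) (v : A), v ∈ zetaNat A (k + 1) → ∀ (w : A) (r : ℤ),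
      bstar b w - r • c ∈ zetaNat A k →
      ∃ u'' ∈ zetaNat A k, bstar (s • b + v) w = (s * r) • c + u'' := by
    intro s v hv w r hw
    have h1 : bstar (s • b + v) w - bstar (s • b) w ∈ zetaNat A k := zeta_L1' _ _ hv
    have h2 : bstar (s • b) w - s • bstar b w ∈ zetaNat A k := zeta_L3 w hb s
    refine ⟨s • (bstar b w - r • c) +
      ((bstar (s • b) w - s • bstar b w) + (bstar (s • b + v) w - bstar (s • b) w)),
      zeta_add_mem (zeta_zsmul_mem s hw) (zeta_add_mem h2 h1), ?_⟩
    rw [smul_sub, smul_smul]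
    abel
  have Estar : ∀ z ∈ S, ∀ a ∈ J, bstar a z ∈ S ∧ bstar z a ∈ S := by
    rintro z ⟨s, t, u, hu, rfl⟩ a ⟨σ, w₀, hw₀, rfl⟩
    have hmem : t • c + u ∈ zetaNat A (k + 1) :=
      zeta_add_mem (zeta_zsmul_mem t hc) (zeta_le (by omega) hu)
    have hzarg : bstar b (s • b + t • c + u) - s • c ∈ zetaNat A k := by
      have h := E2 s (t • c + u) hmem
      rwa [show s • b + (t • c + u) = s • b + t • c + u from by abel] at h
    constructor
    · obtain ⟨u'', hu'', heq⟩ := master σ w₀ hw₀ _ s hzarg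
      exact ⟨0, σ * s, u'', hu'', by rw [zero_smul, zero_add]; exact heq⟩
    · obtain ⟨u'', hu'', heq⟩ := master s (t • c + u) hmem _ σ (E2 σ w₀ hw₀)
      rw [show s • b + (t • c + u) = s • b + t • c + u from by abel] at heq
      exact ⟨0, s * σ, u'', hu'', by rw [zero_smul, zero_add]; exact heq⟩
  have Ssubbrace : IsSubbrace S := by
    refine isSubbrace_of_add S0 Sadd Sneg ?_ ?_
    · intro z w hz hw
      exact (Estar w hw z (SsubJ hz)).1
    · intro z hz
      have hz2 : z ∈ zetaNat A (k + 2) := SsubZ hz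
      have hw' : bstar z z⁻¹ ∈ zetaNat A (k + 1) := (mem_zeta_succ.mp hz2 _).1
      have h3 : bstar z (bstar z z⁻¹) ∈ zetaNat A k := bstar_mem_right_of_succ z hw'
      have hzz : bstar z z ∈ S := (Estar z hz z (SsubJ hz)).1
      have hid : bstar z z⁻¹ = -(bstar z z) - bstar z (bstar z z⁻¹) := by
        conv_lhs => rw [inv_eq' z]
        rw [show -z - bstar z z⁻¹ = -z + -(bstar z z⁻¹) from sub_eq_add_neg _ _,
          bstar_add_right, bstar_neg_right, bstar_neg_right]
        abel
      rw [hid, sub_eq_add_neg]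
      exact Sadd (Sneg hzz) (Sneg (SofZ _ h3))
  exact hT S J ⟨SsubJ, Ssubbrace, hJideal.subbrace,
    fun a ha z hz => (Estar z hz a ha).1,
    fun a ha z hz => (Estar z hz a ha).2⟩ hJideal

/-- **Key step.** In a T-brace, every element of `ζ_{k+2}` has a positive multiple
in `ζ_{k+1}`. -/
theorem key_step (hT : IsTBrace A) {k : ℕ} {a : A} (ha : a ∈ zetaNat A (k + 2)) :
    ∃ m : ℕ, 0 < m ∧ m • a ∈ zetaNat A (k + 1) := by
  by_cases hex : ∃ m : ℕ, 0 < m ∧ m • a ∈ zetaNat A (k + 1)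
  · exact hex
  exfalso
  push_neg at hex
  set c := bstar a a with hcdef
  have hc : c ∈ zetaNat A (k + 1) := (mem_zeta_succ.mp ha a).1
  have hZ : ∀ s : ℤ, s • a ∈ zetaNat A (k + 1) → s = 0 := by
    intro s hs
    by_contra hs0
    have h1 : ((s.natAbs : ℤ)) • a ∈ zetaNat A (k + 1) := by
      rcases Int.natAbs_eq s with h | h
      · rw [← h]; exact hs
      · rw [show ((s.natAbs : ℤ)) = -s from by omega, neg_smul]
        exact zeta_neg_mem hs
    rw [natCast_zsmul] at h1
    exact hex s.natAbs (Int.natAbs_pos.mpr hs0) h1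
  have hI := key_star_ideal hT ha
  have haI : a ∈ {y : A | ∃ s t : ℤ, ∃ u ∈ zetaNat A k, y = s • a + t • bstar a a + u} :=
    ⟨1, 0, 0, zeta_zero_mem k, by simp⟩
  have claim1 : ∀ x : A, ∃ t : ℤ, ∃ u ∈ zetaNat A k, bstar x a = t • c + u := by
    intro x
    obtain ⟨s, t, u, hu, heq⟩ := hI.star_mem_left x trivial a haI
    have hsa : s • a ∈ zetaNat A (k + 1) := by
      have hxa : bstar x a ∈ zetaNat A (k + 1) := (mem_zeta_succ.mp ha x).2
      have h2 : s • a = bstar x a - t • c - u := by rw [heq, ← hcdef]; abel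
      rw [h2]
      exact zeta_sub_mem (zeta_sub_mem hxa (zeta_zsmul_mem t hc)) (zeta_le (by omega) hu)
    have hs0 := hZ s hsa
    subst hs0
    exact ⟨t, u, hu, by rw [heq, zero_smul, zero_add, ← hcdef]⟩
  have claim1' : ∀ x : A, ∃ t : ℤ, ∃ u ∈ zetaNat A k, bstar a x = t • c + u := by
    intro x
    obtain ⟨s, t, u, hu, heq⟩ := hI.star_mem_right x trivial a haI
    have hsa : s • a ∈ zetaNat A (k + 1) := by
      have hxa : bstar a x ∈ zetaNat A (k + 1) := (mem_zeta_succ.mp ha x).1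
      have h2 : s • a = bstar a x - t • c - u := by rw [heq, ← hcdef]; abel
      rw [h2]
      exact zeta_sub_mem (zeta_sub_mem hxa (zeta_zsmul_mem t hc)) (zeta_le (by omega) hu)
    have hs0 := hZ s hsa
    subst hs0
    exact ⟨t, u, hu, by rw [heq, zero_smul, zero_add, ← hcdef]⟩
  by_cases hcc : ∃ r : ℤ, r ≠ 0 ∧ r • c ∈ zetaNat A k
  · -- `c` has a nonzero multiple deep down: then `d • a ∈ ζ_{k+1}`, contradiction.
    obtain ⟨d, hd0, hdc⟩ := hcc
    have hda : d • a ∈ zetaNat A (k + 1) := by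
      rw [mem_zeta_succ]
      intro x
      have hmul : ∀ (t : ℤ) (u : A), u ∈ zetaNat A k → d • (t • c + u) ∈ zetaNat A k := by
        intro t u hu
        have h1 : d • (t • c + u) = t • (d • c) + d • u := by
          rw [smul_add, smul_smul, smul_smul, mul_comm]
        rw [h1]
        exact zeta_add_mem (zeta_zsmul_mem t hdc) (zeta_zsmul_mem d hu)
      constructor
      · obtain ⟨t, u, hu, heq⟩ := claim1' x
        have h3 := zeta_L3 x ha d
        have h4 : bstar (d • a) x =
            (bstar (d • a) x - d • bstar a x) + d • (t • c + u) := by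
          rw [← heq]; abel
        rw [h4]
        exact zeta_add_mem h3 (hmul t u hu)
      · obtain ⟨t, u, hu, heq⟩ := claim1 x
        rw [bstar_zsmul_right, heq]
        exact hmul t u hu
    exact hd0 (hZ d hda)
  · push_neg at hcc
    have hZc : ∀ r : ℤ, r • c ∈ zetaNat A k → r = 0 := by
      intro r hr
      by_contra hr0
      exact hcc r hr0 hr
    -- the core divisibility argument
    have core : ∀ j : ℕ, 0 < j → ∀ (t : ℤ) (y : A),
        y ∈ zetaNat A (k + 1) →
        y ∈ {z : A | ∃ s t' : ℤ, ∃ u ∈ zetaNat A k,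
          z = s • ((j : ℤ) • a) + t' • bstar ((j : ℤ) • a) ((j : ℤ) • a) + u} →
        y - ((j : ℤ) * t) • c ∈ zetaNat A k → (j : ℤ) ∣ t := by
      intro j hj t y hy hyI hyc
      set b := (j : ℤ) • a with hbdef
      have hbZ : b ∈ zetaNat A (k + 2) := zeta_zsmul_mem _ ha
      have hbb : bstar b b ∈ zetaNat A (k + 1) := (mem_zeta_succ.mp hbZ b).1
      -- `bstar b b ≡ j² • c mod ζ_k`
      have hE : bstar b b - ((j : ℤ) * (j : ℤ)) • c ∈ zetaNat A k := by
        have h1 : bstar b b - (j : ℤ) • bstar a b ∈ zetaNat A k := zeta_L3 b ha (j : ℤ)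
        have h2 : bstar a b = (j : ℤ) • c := by
          rw [hbdef, bstar_zsmul_right, hcdef]
        rw [h2, smul_smul] at h1
        exact h1
      obtain ⟨s, t', u₁, hu₁, heq⟩ := hyI
      have hsb : s • b ∈ zetaNat A (k + 1) := by
        have h2 : s • b = y - t' • bstar b b - u₁ := by rw [heq]; abel
        rw [h2]
        exact zeta_sub_mem (zeta_sub_mem hy (zeta_zsmul_mem t' hbb)) (zeta_le (by omega) hu₁)
      have hs0 : s * (j : ℤ) = 0 := by
        apply hZ
        rw [← smul_smul]
        exact hsb
      have hsb0 : s • b = 0 := by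
        rw [hbdef, smul_smul, hs0, zero_smul]
      have hy2 : y = (t' * ((j : ℤ) * (j : ℤ))) • c +
          (t' • (bstar b b - ((j : ℤ) * (j : ℤ)) • c) + u₁) := by
        rw [heq, hsb0, smul_sub, smul_smul]
        abel
      have hfin : ((j : ℤ) * t - t' * ((j : ℤ) * (j : ℤ))) • c ∈ zetaNat A k := by
        have h3 : ((j : ℤ) * t - t' * ((j : ℤ) * (j : ℤ))) • c =
            -(y - ((j : ℤ) * t) • c) +
              (t' • (bstar b b - ((j : ℤ) * (j : ℤ)) • c) + u₁) := by
          rw [sub_smul]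
          nth_rewrite 1 [hy2]
          abel
        rw [h3]
        exact zeta_add_mem (zeta_neg_mem hyc)
          (zeta_add_mem (zeta_zsmul_mem t' hE) hu₁)
      have h4 := hZc _ hfin
      have hj0 : (j : ℤ) ≠ 0 := by
        have : j ≠ 0 := Nat.pos_iff_ne_zero.mp hj
        exact_mod_cast this
      have h6 : (j : ℤ) * t = (j : ℤ) * (t' * (j : ℤ)) := by linear_combination h4
      have h7 : t = t' * (j : ℤ) := mul_left_cancel₀ hj0 h6
      exact ⟨t', by rw [h7, mul_comm]⟩
    -- conclude `t = 0` from divisibility by all positive integers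
    have tzero : ∀ t : ℤ, (∀ j : ℕ, 0 < j → (j : ℤ) ∣ t) → t = 0 := by
      intro t hdvd
      by_contra ht0
      have h1 := hdvd (t.natAbs + 1) (Nat.succ_pos _)
      have h3 : ((t.natAbs + 1 : ℕ) : ℤ) ≤ |t| :=
        Int.le_of_dvd (abs_pos.mpr ht0) ((dvd_abs _ _).mpr h1)
      have h4 : |t| = (t.natAbs : ℤ) := Int.abs_eq_natAbs t
      push_cast at h3
      omega
    -- show `a ∈ ζ_{k+1}`, contradicting `hex 1`
    have hmem : a ∈ zetaNat A (k + 1) := by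
      rw [mem_zeta_succ]
      intro x
      constructor
      · -- bstar a x
        obtain ⟨t, u, hu, heq⟩ := claim1' x
        have ht : t = 0 := by
          apply tzero
          intro j hj
          set b := (j : ℤ) • a with hbdef
          have hbZ : b ∈ zetaNat A (k + 2) := zeta_zsmul_mem _ ha
          have hIj := key_star_ideal hT hbZ
          have hbI : b ∈ {y : A | ∃ s t' : ℤ, ∃ u' ∈ zetaNat A k,
              y = s • b + t' • bstar b b + u'} :=
            ⟨1, 0, 0, zeta_zero_mem k, by simp⟩
          refine core j hj t (bstar b x) (mem_zeta_succ.mp hbZ x).1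
            (hIj.star_mem_right x trivial b hbI) ?_
          have h3 : bstar b x - (j : ℤ) • bstar a x ∈ zetaNat A k := zeta_L3 x ha (j : ℤ)
          have h4 : bstar b x - ((j : ℤ) * t) • c =
              (bstar b x - (j : ℤ) • bstar a x) + (j : ℤ) • u := by
            rw [heq, smul_add, smul_smul]
            abel
          rw [h4]
          exact zeta_add_mem h3 (zeta_zsmul_mem _ hu)
        rw [heq, ht, zero_smul, zero_add]
        exact hu
      · -- bstar x a
        obtain ⟨t, u, hu, heq⟩ := claim1 x
        have ht : t = 0 := by
          apply tzero
          intro j hj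
          set b := (j : ℤ) • a with hbdef
          have hbZ : b ∈ zetaNat A (k + 2) := zeta_zsmul_mem _ ha
          have hIj := key_star_ideal hT hbZ
          have hbI : b ∈ {y : A | ∃ s t' : ℤ, ∃ u' ∈ zetaNat A k,
              y = s • b + t' • bstar b b + u'} :=
            ⟨1, 0, 0, zeta_zero_mem k, by simp⟩
          refine core j hj t (bstar x b) (mem_zeta_succ.mp hbZ x).2
            (hIj.star_mem_left x trivial b hbI) ?_
          have h4 : bstar x b - ((j : ℤ) * t) • c = (j : ℤ) • u := by
            rw [hbdef, bstar_zsmul_right, heq, smul_add, smul_smul]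
            abel
          rw [h4]
          exact zeta_zsmul_mem _ hu
        rw [heq, ht, zero_smul, zero_add]
        exact hu
    have h1 := hex 1 Nat.one_pos
    rw [one_smul] at h1
    exact h1 hmem

end Aux

end LeftBrace

open LeftBrace in
/-- **Proposition.** Let `A` be a T-brace.  Then for every natural `n` the additive group
of `ζ_n(⋆,A)/ζ(⋆,A)` is periodic: for every `a ∈ ζ_n(⋆,A)` there is a positive integer
`m` with `m • a ∈ ζ(⋆,A)`. -/
theorem zetaNat_div_starCenter_periodic
    {A : Type u} [LeftBrace A] (hT : IsTBrace A) (n : ℕ) :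
    ∀ a ∈ zetaNat A n, ∃ m : ℕ, 0 < m ∧ m • a ∈ starCenter A := by
  induction n with
  | zero =>
    intro a ha
    rw [show zetaNat A 0 = ({0} : Set A) from rfl, Set.mem_singleton_iff] at ha
    subst ha
    refine ⟨1, Nat.one_pos, ?_⟩
    rw [smul_zero]
    intro x
    exact ⟨bstar_zero_left x, bstar_zero_right x⟩
  | succ n ih =>
    intro a ha
    rcases n with _ | k
    · -- `a ∈ ζ₁ = ζ(⋆,A)`
      refine ⟨1, Nat.one_pos, ?_⟩
      rw [one_smul]
      intro x
      have h := mem_zeta_succ.mp ha x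
      constructor
      · simpa [zetaNat] using h.1
      · simpa [zetaNat] using h.2
    · obtain ⟨m, hm, hma⟩ := key_step hT ha
      obtain ⟨m', hm', h⟩ := ih (m • a) hma
      exact ⟨m' * m, Nat.mul_pos hm' hm, by rw [mul_smul]; exact h⟩
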